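/- For every real number r with 0 ≤ r ≤ 1, there exists a strictly increasing sequence s_1 < s_2 < s_3 < … of positive integers such that, writing S_k = {s_1, s_2, …, s_k}, the ratio CM(S_k)/k tends to r as k tends to infinity. -/

import Mathlib

/-- The Cookie Monster number of a finite set `S` of jar contents: the least `n`
for which there exist positive move amounts `a_1, …, a_n` such that every `s ∈ S`
is the sum of a subset of the move amounts. -/
noncomputable def CM (S : Finset ℕ) : ℕ :=
  sInf {n : ℕ | ∃ a : Fin n → ℕ, (∀ i, 0 < a i) ∧
    ∀ s ∈ S, ∃ I : Finset (Fin n), ∑ i ∈ I, a i = s}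

open Finset

/-- Key lower bound: if a rapidly growing family `t 0 < t 1 < …` (with
`(j+1) * t j < t (j+1)`) is realized as subset sums of positive moves indexed
by a finset `A`, then `A` has at least `b` elements. -/
lemma cookie_lb {ι : Type*} [DecidableEq ι] (b : ℕ) (t : ℕ → ℕ)
    (hpos : ∀ j, j < b → 0 < t j)
    (hg : ∀ j, j + 2 ≤ b → (j + 1) * t j < t (j + 1))
    (a : ι → ℕ) (A : Finset ι)
    (I : ℕ → Finset ι) (hIsub : ∀ j, j < b → I j ⊆ A)
    (hIsum : ∀ j, j < b → ∑ i ∈ I j, a i = t j) : b ≤ A.card := by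
  induction b generalizing A with
  | zero => exact Nat.zero_le _
  | succ b ih =>
    have tmono : ∀ j, j + 1 < b + 1 → t j < t (j + 1) := by
      intro j hj
      have h := hg j (by omega)
      have := hpos j (by omega)
      calc t j ≤ (j + 1) * t j := Nat.le_mul_of_pos_left _ (by omega)
        _ < t (j + 1) := h
    have tle : ∀ j, j < b → t j ≤ t (b - 1) := by
      intro j hj
      have : ∀ d, ∀ j, j + d ≤ b - 1 → t j ≤ t (j + d) := by
        intro d
        induction d with
        | zero => intro j _; simp
        | succ d ihd =>
          intro j hjd
          calc t j ≤ t (j + d) := ihd j (by omega)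
            _ ≤ t (j + d + 1) := le_of_lt (tmono (j + d) (by omega))
            _ = t (j + (d + 1)) := by ring_nf
      have h := this (b - 1 - j) j (by omega)
      rwa [show j + (b - 1 - j) = b - 1 by omega] at h
    rcases Nat.eq_zero_or_pos b with rfl | hb
    · -- b = 0 : show 1 ≤ A.card
      have h0 := hIsum 0 (by omega)
      have hp0 := hpos 0 (by omega)
      have hne : (I 0).Nonempty := by
        rcases (I 0).eq_empty_or_nonempty with he | hne
        · rw [he, Finset.sum_empty] at h0; omega
        · exact hne
      obtain ⟨i, hi⟩ := hne
      exact Finset.card_pos.mpr ⟨i, hIsub 0 (by omega) hi⟩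
    · by_contra hcon
      push_neg at hcon
      have hcard : A.card ≤ b := by omega
      -- find a big move in I b
      have hbig : ∃ i ∈ I b, t (b - 1) < a i := by
        by_contra hall
        push_neg at hall
        have hsum := hIsum b (by omega)
        have : t b ≤ (I b).card * t (b - 1) :=
          hsum ▸ Finset.sum_le_card_nsmul _ _ _ (fun i hi => hall i hi)
        have hc : (I b).card ≤ b := le_trans (Finset.card_le_card (hIsub b (by omega))) hcard
        have : t b ≤ b * t (b - 1) := le_trans this (Nat.mul_le_mul_right _ hc)
        have hgb := hg (b - 1) (by omega)
        rw [show b - 1 + 1 = b by omega] at hgb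
        omega
      obtain ⟨i0, hi0mem, hi0big⟩ := hbig
      have hi0A : i0 ∈ A := hIsub b (by omega) hi0mem
      have hnot : ∀ j, j < b → i0 ∉ I j := by
        intro j hj hmem
        have : a i0 ≤ ∑ i ∈ I j, a i := Finset.single_le_sum (fun i _ => Nat.zero_le _) hmem
        rw [hIsum j (by omega)] at this
        have := tle j hj
        omega
      have := ih (fun j hj => hpos j (by omega)) (fun j hj => hg j (by omega)) (A.erase i0)
        (fun j hj x hx => Finset.mem_erase.mpr ⟨fun he => hnot j hj (he ▸ hx), hIsub j (by omega) hx⟩)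
        (fun j hj => hIsum j (by omega))
      rw [Finset.card_erase_of_mem hi0A] at this
      omega

/-- Every `o < 2^T` is a sum of distinct powers of two below `2^T`. -/
lemma binary_rep : ∀ T o : ℕ, o < 2 ^ T →
    ∃ J : Finset ℕ, J ⊆ Finset.range T ∧ ∑ j ∈ J, 2 ^ j = o := by
  intro T
  induction T with
  | zero => intro o ho; exact ⟨∅, by simp, by simpa using by omega⟩
  | succ T ih =>
    intro o ho
    by_cases h : o < 2 ^ T
    · obtain ⟨J, hJ, hs⟩ := ih o h
      exact ⟨J, hJ.trans (Finset.range_subset_range.mpr (Nat.le_succ T)), hs⟩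
    · push_neg at h
      obtain ⟨J, hJ, hs⟩ := ih (o - 2 ^ T) (by rw [pow_succ] at ho; omega)
      have hT : T ∉ J := fun hT => by simpa using hJ hT
      refine ⟨insert T J, ?_, ?_⟩
      · intro x hx
        rcases Finset.mem_insert.mp hx with rfl | hx
        · exact Finset.self_mem_range_succ x
        · exact (Finset.range_subset_range.mpr (Nat.le_succ T)) (hJ hx)
      · rw [Finset.sum_insert hT, hs]; omega

/-- Discrete IVT for monotone ℕ-valued maps with steps ≤ 1 starting at 0. -/
lemma hits_all (B : ℕ → ℕ) (h0 : B 0 = 0) (hstep : ∀ i, B (i + 1) ≤ B i + 1) :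
    ∀ j m, m ≤ B j → ∃ i, i ≤ j ∧ B i = m := by
  intro j
  induction j with
  | zero => intro m hm; exact ⟨0, le_rfl, by omega⟩
  | succ j ih =>
    intro m hm
    by_cases h : m ≤ B j
    · obtain ⟨i, hi, hB⟩ := ih m h
      exact ⟨i, hi.trans (Nat.le_succ j), hB⟩
    · push_neg at h
      have := hstep j
      exact ⟨j + 1, le_rfl, by omega⟩

/-- The rapidly growing block bases. -/
def Hf (N : ℕ) : ℕ → ℕ
  | 0 => 1
  | m + 1 => (m + 2) * (Hf N m + N * (m + 2) + 1) + 1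

lemma Hf_pos (N m : ℕ) : 0 < Hf N m := by
  cases m with
  | zero => simp [Hf]
  | succ m => simp [Hf]

lemma Hf_growth (N m : ℕ) : (m + 1) * (Hf N m + N * (m + 1)) < Hf N (m + 1) := by
  have h : (m + 1) * (Hf N m + N * (m + 1)) ≤ (m + 2) * (Hf N m + N * (m + 2) + 1) := by
    apply Nat.mul_le_mul (by omega)
    have : N * (m + 1) ≤ N * (m + 2) := Nat.mul_le_mul_left _ (by omega)
    omega
  calc (m + 1) * (Hf N m + N * (m + 1)) ≤ (m + 2) * (Hf N m + N * (m + 2) + 1) := h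
    _ < Hf N (m + 1) := by simp [Hf]

lemma Hf_strictMono (N : ℕ) : StrictMono (Hf N) := by
  apply strictMono_nat_of_lt_succ
  intro m
  have := Hf_growth N m
  have h2 : Hf N m ≤ (m + 1) * (Hf N m + N * (m + 1)) := by
    calc Hf N m ≤ Hf N m + N * (m + 1) := Nat.le_add_right _ _
      _ ≤ (m + 1) * (Hf N m + N * (m + 1)) := Nat.le_mul_of_pos_left _ (by omega)
  omega

/-- First index belonging to block `m`. -/
noncomputable def iFirst (r : ℝ) (m : ℕ) : ℕ := sInf {i | ⌊r * i⌋₊ = m}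

/-- The cookie sequence: block base plus index. -/
noncomputable def seqF (r : ℝ) (i : ℕ) : ℕ := Hf ⌈r⁻¹⌉₊ ⌊r * i⌋₊ + i

section Main
variable {r : ℝ} (h0 : 0 ≤ r) (h1 : r ≤ 1)

lemma B_zero : ⌊r * (0 : ℕ)⌋₊ = 0 := by simp

lemma B_mono (h0 : 0 ≤ r) : Monotone (fun i : ℕ => ⌊r * i⌋₊) := by
  intro i j hij
  exact Nat.floor_le_floor (mul_le_mul_of_nonneg_left (by exact_mod_cast hij) h0)

lemma B_step (h0 : 0 ≤ r) (h1 : r ≤ 1) (i : ℕ) : ⌊r * (i + 1 : ℕ)⌋₊ ≤ ⌊r * i⌋₊ + 1 := by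
  have h : r * (i + 1 : ℕ) ≤ r * i + 1 := by
    push_cast; nlinarith
  calc ⌊r * (i + 1 : ℕ)⌋₊ ≤ ⌊r * i + 1⌋₊ := Nat.floor_le_floor h
    _ = ⌊r * i⌋₊ + 1 := Nat.floor_add_one (by positivity)

lemma seqF_strictMono (h0 : 0 ≤ r) : StrictMono (seqF r) := by
  apply strictMono_nat_of_lt_succ
  intro i
  have hb : ⌊r * (i : ℕ)⌋₊ ≤ ⌊r * ((i + 1 : ℕ) : ℕ)⌋₊ := B_mono h0 (Nat.le_succ i)
  have h : Hf ⌈r⁻¹⌉₊ ⌊r * (i : ℕ)⌋₊ ≤ Hf ⌈r⁻¹⌉₊ ⌊r * ((i + 1 : ℕ) : ℕ)⌋₊ :=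
    (Hf_strictMono ⌈r⁻¹⌉₊).monotone hb
  simp only [seqF]
  omega

lemma seqF_pos (i : ℕ) : 0 < seqF r i := by
  have := Hf_pos ⌈r⁻¹⌉₊ ⌊r * i⌋₊
  simp only [seqF]; omega

lemma iFirst_spec (m : ℕ) (h : ∃ i : ℕ, ⌊r * i⌋₊ = m) :
    ⌊r * (iFirst r m : ℕ)⌋₊ = m := Nat.sInf_mem h

lemma iFirst_le (m i : ℕ) (h : ⌊r * i⌋₊ = m) : iFirst r m ≤ i := Nat.sInf_le h

lemma iFirst_bound (h0 : 0 ≤ r) (m : ℕ) (h : ∃ i : ℕ, ⌊r * i⌋₊ = m) :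
    iFirst r m ≤ ⌈r⁻¹⌉₊ * (m + 1) := by
  rcases Nat.eq_zero_or_pos m with rfl | hm
  · have : iFirst r 0 ≤ 0 := iFirst_le 0 0 (by simp)
    omega
  · set i := iFirst r m with hi
    have hBi : ⌊r * i⌋₊ = m := iFirst_spec m h
    have hle : (m : ℝ) ≤ r * i := by
      rw [← hBi]; exact Nat.floor_le (by positivity)
    have hrpos : 0 < r := by
      rcases lt_or_ge 0 r with h | h
      · exact h
      · exfalso
        have : r * i ≤ 0 := mul_nonpos_of_nonpos_of_nonneg h (by positivity)
        have : (1 : ℝ) ≤ (m : ℝ) := by exact_mod_cast hm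
        linarith
    have hlt : r * i < m + 1 := by
      rw [← hBi]; exact Nat.lt_floor_add_one _
    have hNr : r⁻¹ ≤ (⌈r⁻¹⌉₊ : ℝ) := Nat.le_ceil _
    have : (i : ℝ) < (⌈r⁻¹⌉₊ * (m + 1) : ℕ) := by
      have hi' : (i : ℝ) < (m + 1) * r⁻¹ := by
        rw [lt_mul_inv_iff₀ hrpos]
        linarith [hlt]
      push_cast
      calc (i : ℝ) < (m + 1) * r⁻¹ := hi'
        _ ≤ (m + 1) * ⌈r⁻¹⌉₊ := by
            apply mul_le_mul_of_nonneg_left hNr (by positivity)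
        _ = ⌈r⁻¹⌉₊ * (m + 1) := by ring
    exact le_of_lt (by exact_mod_cast this)

end Main

lemma CM_mem (h0 : 0 ≤ r) (h1 : r ≤ 1) (k : ℕ) (hk : 1 ≤ k) :
    (⌊r * ((k - 1 : ℕ) : ℝ)⌋₊ + 1 + Nat.clog 2 k) ∈
      {n : ℕ | ∃ a : Fin n → ℕ, (∀ i, 0 < a i) ∧
        ∀ s ∈ (Finset.range k).image (seqF r), ∃ I : Finset (Fin n), ∑ i ∈ I, a i = s} := by
  set M := ⌊r * ((k - 1 : ℕ) : ℝ)⌋₊ with hM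
  set T := Nat.clog 2 k with hT
  set N := ⌈r⁻¹⌉₊ with hN
  refine ⟨fun x => if (x : ℕ) < M + 1 then Hf N (x : ℕ) + iFirst r (x : ℕ)
      else 2 ^ ((x : ℕ) - (M + 1)), ?_, ?_⟩
  · intro x
    by_cases h : (x : ℕ) < M + 1
    · simp only [if_pos h]
      have := Hf_pos N (x : ℕ); omega
    · simp only [if_neg h]
      positivity
  · intro s hs
    obtain ⟨i, hi, rfl⟩ := Finset.mem_image.mp hs
    have hik : i < k := Finset.mem_range.mp hi
    have hm : ⌊r * (i : ℕ)⌋₊ ≤ M := by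
      rw [hM]
      exact B_mono h0 (by omega : i ≤ k - 1)
    set m := ⌊r * (i : ℕ)⌋₊ with hmdef
    have hfi : iFirst r m ≤ i := iFirst_le m i rfl
    have ho : i - iFirst r m < 2 ^ T := by
      have h2 := Nat.le_pow_clog one_lt_two k
      rw [← hT] at h2
      omega
    obtain ⟨J, hJsub, hJsum⟩ := binary_rep T (i - iFirst r m) ho
    have hfm : m < M + 1 + T := by omega
    have hjlt : ∀ j : {x // x ∈ J}, M + 1 + (j : ℕ) < M + 1 + T := by
      intro j
      have := Finset.mem_range.mp (hJsub j.2)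
      omega
    set emb : {x // x ∈ J} → Fin (M + 1 + T) := fun j => ⟨M + 1 + (j : ℕ), hjlt j⟩ with hemb
    refine ⟨insert ⟨m, hfm⟩ ((J.attach).image emb), ?_⟩
    have hnotmem : (⟨m, hfm⟩ : Fin (M + 1 + T)) ∉ (J.attach).image emb := by
      intro hmem
      obtain ⟨j, _, hj⟩ := Finset.mem_image.mp hmem
      have h3 := congrArg Fin.val hj
      simp only [hemb] at h3
      omega
    rw [Finset.sum_insert hnotmem]
    rw [Finset.sum_image (by
      intro x _ y _ hxy
      have h4 := congrArg Fin.val hxy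
      simp only [hemb] at h4
      exact Subtype.ext (by omega))]
    have hterm : ∀ j ∈ J.attach,
        (if ((emb j : Fin (M + 1 + T)) : ℕ) < M + 1
          then Hf N ((emb j : Fin (M + 1 + T)) : ℕ) + iFirst r ((emb j : Fin (M + 1 + T)) : ℕ)
          else 2 ^ (((emb j : Fin (M + 1 + T)) : ℕ) - (M + 1))) = 2 ^ (j : ℕ) := by
      intro j _
      simp only [hemb]
      rw [if_neg (by simp; omega)]
      congr 1
      omega
    rw [Finset.sum_congr rfl hterm, Finset.sum_attach J (fun j => 2 ^ j), hJsum]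
    simp only []
    rw [if_pos (by omega : m < M + 1)]
    simp only [seqF, ← hN, ← hmdef]
    omega

lemma CM_lower_est (h0 : 0 ≤ r) (h1 : r ≤ 1) (k : ℕ) (hk : 1 ≤ k) :
    ⌊r * ((k - 1 : ℕ) : ℝ)⌋₊ + 1 ≤ CM ((Finset.range k).image (seqF r)) := by
  set M := ⌊r * ((k - 1 : ℕ) : ℝ)⌋₊ with hM
  set N := ⌈r⁻¹⌉₊ with hN
  apply le_csInf ⟨_, CM_mem h0 h1 k hk⟩
  rintro n ⟨a, hapos, hrep⟩
  -- the designated first elements of each block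
  set t : ℕ → ℕ := fun j => Hf N j + iFirst r j with ht
  have hblock : ∀ j, j ≤ M → ∃ i, i ≤ k - 1 ∧ ⌊r * (i : ℕ)⌋₊ = j := by
    intro j hj
    exact hits_all (fun i => ⌊r * (i : ℕ)⌋₊) (by simp) (B_step h0 h1) (k - 1) j hj
  have htmem : ∀ j, j ≤ M → t j ∈ (Finset.range k).image (seqF r) := by
    intro j hj
    obtain ⟨i, hik, hBi⟩ := hblock j hj
    have hBfirst : ⌊r * ((iFirst r j : ℕ) : ℝ)⌋₊ = j := iFirst_spec j ⟨i, hBi⟩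
    have hlt : iFirst r j < k := lt_of_le_of_lt (le_trans (iFirst_le j i hBi) hik) (by omega)
    refine Finset.mem_image.mpr ⟨iFirst r j, Finset.mem_range.mpr hlt, ?_⟩
    simp only [seqF, ← hN, hBfirst, ht]
  have hrep' : ∀ j, j < M + 1 → ∃ I : Finset (Fin n), ∑ i ∈ I, a i = t j := by
    intro j hj
    exact hrep (t j) (htmem j (by omega))
  choose I hI using hrep'
  have := cookie_lb (M + 1) t
    (fun j _ => by have := Hf_pos N j; simp only [ht]; omega)
    (fun j hj => by
      have hb : iFirst r j ≤ N * (j + 1) := iFirst_bound h0 j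
        (by obtain ⟨i, _, hBi⟩ := hblock j (by omega); exact ⟨i, hBi⟩)
      have hgrow := Hf_growth N j
      have h2 : (j + 1) * t j ≤ (j + 1) * (Hf N j + N * (j + 1)) := by
        apply Nat.mul_le_mul_left
        simp only [ht]; omega
      have h3 : Hf N (j + 1) ≤ t (j + 1) := by simp only [ht]; omega
      omega)
    a Finset.univ
    (fun j => if h : j < M + 1 then I j h else ∅)
    (fun j hj => Finset.subset_univ _)
    (fun j hj => by rw [dif_pos hj]; exact hI j hj)
  simpa using this

lemma sq_le_four_pow : ∀ m : ℕ, m ^ 2 ≤ 4 ^ m := by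
  intro m
  induction m with
  | zero => norm_num
  | succ m ih =>
    have h1 : m < 4 ^ m := Nat.lt_pow_self (by norm_num)
    have h2 : (m + 1) ^ 2 = m ^ 2 + 2 * m + 1 := by ring
    have h3 : 4 ^ (m + 1) = 4 * 4 ^ m := by ring
    omega

lemma clog_le_sqrt (k : ℕ) : Nat.clog 2 k ≤ 2 * (Nat.sqrt k + 1) := by
  rw [Nat.clog_le_iff_le_pow one_lt_two]
  have h1 : k < (Nat.sqrt k + 1) ^ 2 := by
    have := Nat.lt_succ_sqrt k
    nlinarith [Nat.sqrt k.sqrt]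
  have h2 : (Nat.sqrt k + 1) ^ 2 ≤ 4 ^ (Nat.sqrt k + 1) := sq_le_four_pow _
  have h3 : (4 : ℕ) ^ (Nat.sqrt k + 1) = 2 ^ (2 * (Nat.sqrt k + 1)) := by
    rw [pow_mul]; norm_num
  omega

open Filter in
lemma tendsto_clog_div : Tendsto (fun k : ℕ => (Nat.clog 2 k : ℝ) / k) atTop (nhds 0) := by
  apply squeeze_zero' (Filter.eventually_atTop.mpr ⟨1, fun k hk => by positivity⟩)
    (g := fun k : ℕ => 4 / Real.sqrt k)
  · refine Filter.eventually_atTop.mpr ⟨1, fun k hk => ?_⟩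
    have hk0 : (0 : ℝ) < k := by exact_mod_cast hk
    have hsq : ((Nat.sqrt k : ℝ)) ≤ Real.sqrt k := by
      rw [Real.le_sqrt (by positivity) (by positivity)]
      exact_mod_cast Nat.sqrt_le' k
    have h1 : (1 : ℝ) ≤ Real.sqrt k := by
      rw [Real.one_le_sqrt]
      exact_mod_cast hk
    have hclog : (Nat.clog 2 k : ℝ) ≤ 2 * (Nat.sqrt k) + 2 := by
      have := clog_le_sqrt k
      push_cast
      exact_mod_cast by push_cast at this ⊢; linarith [this]
    have h2 : (Nat.clog 2 k : ℝ) ≤ 4 * Real.sqrt k := by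
      calc (Nat.clog 2 k : ℝ) ≤ 2 * (Nat.sqrt k) + 2 := hclog
        _ ≤ 2 * Real.sqrt k + 2 * Real.sqrt k := by linarith
        _ = 4 * Real.sqrt k := by ring
    rw [div_le_div_iff₀ hk0 (by positivity)]
    calc (Nat.clog 2 k : ℝ) * Real.sqrt k ≤ (4 * Real.sqrt k) * Real.sqrt k := by
          apply mul_le_mul_of_nonneg_right h2 (Real.sqrt_nonneg _)
      _ = 4 * (Real.sqrt k * Real.sqrt k) := by ring
      _ = 4 * k := by rw [Real.mul_self_sqrt (le_of_lt hk0)]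
      _ = 4 * k := rfl
  · have hs : Tendsto (fun x : ℝ => x ^ ((1 : ℝ) / 2)) atTop atTop :=
      tendsto_rpow_atTop (by norm_num)
    have hcomp : Tendsto (fun k : ℕ => Real.sqrt k) atTop atTop := by
      have := hs.comp tendsto_natCast_atTop_atTop (α := ℕ)
      apply this.congr
      intro k
      simp [Function.comp, Real.sqrt_eq_rpow]
    have hinv := hcomp.inv_tendsto_atTop
    have : Tendsto (fun k : ℕ => 4 * (Real.sqrt k)⁻¹) atTop (nhds (4 * 0)) :=
      hinv.const_mul 4
    simpa [div_eq_mul_inv] using this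

open Filter in
lemma tendsto_main_lower {r : ℝ} (h0 : 0 ≤ r) (h1 : r ≤ 1) :
    Tendsto (fun k : ℕ => ((⌊r * ((k - 1 : ℕ) : ℝ)⌋₊ + 1 : ℕ) : ℝ) / k) atTop (nhds r) := by
  have hlow : Tendsto (fun k : ℕ => r - 1 / (k : ℝ)) atTop (nhds (r - 0)) :=
    tendsto_const_nhds.sub tendsto_one_div_atTop_nhds_zero_nat
  have hup : Tendsto (fun k : ℕ => r + 1 / (k : ℝ)) atTop (nhds (r + 0)) :=
    tendsto_const_nhds.add tendsto_one_div_atTop_nhds_zero_nat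
  rw [sub_zero] at hlow
  rw [add_zero] at hup
  apply tendsto_of_tendsto_of_tendsto_of_le_of_le' hlow hup
  · refine Filter.eventually_atTop.mpr ⟨1, fun k hk => ?_⟩
    have hk0 : (0 : ℝ) < k := by exact_mod_cast hk
    have hc : ((k - 1 : ℕ) : ℝ) = (k : ℝ) - 1 := by
      push_cast [hk]; ring
    have hfl : r * ((k - 1 : ℕ) : ℝ) < (⌊r * ((k - 1 : ℕ) : ℝ)⌋₊ : ℝ) + 1 :=
      Nat.lt_floor_add_one _
    have hmul : (1 / (k : ℝ)) * k = 1 := by field_simp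
    rw [sub_le_iff_le_add, div_add' _ _ _ (ne_of_gt hk0), le_div_iff₀ hk0]
    push_cast
    nlinarith [hfl, hc, hmul]
  · refine Filter.eventually_atTop.mpr ⟨1, fun k hk => ?_⟩
    have hk0 : (0 : ℝ) < k := by exact_mod_cast hk
    have hc : ((k - 1 : ℕ) : ℝ) = (k : ℝ) - 1 := by
      push_cast [hk]; ring
    have hfl : (⌊r * ((k - 1 : ℕ) : ℝ)⌋₊ : ℝ) ≤ r * ((k - 1 : ℕ) : ℝ) :=
      Nat.floor_le (by positivity)
    have hmul : (1 / (k : ℝ)) * k = 1 := by field_simp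
    rw [div_le_iff₀ hk0]
    push_cast
    nlinarith [hfl, hc, hmul]


/-- For every real `0 ≤ r ≤ 1` there is a strictly increasing sequence of positive
integers whose initial segments `S_k` satisfy `CM(S_k)/k → r` as `k → ∞`. -/
theorem cm_ratio_any_real (r : ℝ) (h0 : 0 ≤ r) (h1 : r ≤ 1) :
    ∃ s : ℕ → ℕ, StrictMono s ∧ (∀ i, 0 < s i) ∧
      Filter.Tendsto (fun k : ℕ => (CM ((Finset.range k).image s) : ℝ) / k)
        Filter.atTop (nhds r) := by
  refine ⟨seqF r, seqF_strictMono h0, fun i => seqF_pos i, ?_⟩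
  have hg := tendsto_main_lower h0 h1
  have hh : Filter.Tendsto (fun k : ℕ => ((⌊r * ((k - 1 : ℕ) : ℝ)⌋₊ + 1 : ℕ) : ℝ) / k
      + (Nat.clog 2 k : ℝ) / k) Filter.atTop (nhds (r + 0)) := hg.add tendsto_clog_div
  rw [add_zero] at hh
  apply tendsto_of_tendsto_of_tendsto_of_le_of_le' hg hh
  · refine Filter.eventually_atTop.mpr ⟨1, fun k hk => ?_⟩
    have hk0 : (0 : ℝ) < k := by exact_mod_cast hk
    have hle := CM_lower_est h0 h1 k hk
    have : ((⌊r * ((k - 1 : ℕ) : ℝ)⌋₊ + 1 : ℕ) : ℝ) ≤ (CM ((Finset.range k).image (seqF r)) : ℝ) := by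
      exact_mod_cast hle
    gcongr
  · refine Filter.eventually_atTop.mpr ⟨1, fun k hk => ?_⟩
    have hk0 : (0 : ℝ) < k := by exact_mod_cast hk
    have hle : CM ((Finset.range k).image (seqF r)) ≤ ⌊r * ((k - 1 : ℕ) : ℝ)⌋₊ + 1 + Nat.clog 2 k :=
      Nat.sInf_le (CM_mem h0 h1 k hk)
    have hle' : (CM ((Finset.range k).image (seqF r)) : ℝ) ≤
        ((⌊r * ((k - 1 : ℕ) : ℝ)⌋₊ + 1 : ℕ) : ℝ) + (Nat.clog 2 k : ℝ) := by
      exact_mod_cast hle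
    rw [← add_div]
    gcongr
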